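/- A unilateral backward weighted shift B on ℓ²(ℕ) with positive weight sequence {w_n} is diskcyclic if and only if lim sup_{n→∞} (w₁ w₂ ⋯ w_n) = ∞. -/

import Mathlib

open Filter Topology Pointwise
open scoped ENNReal

/-- The disk orbit of `x` under `T`: `{α • Tⁿ x : n ≥ 0, α ∈ ℂ, |α| ≤ 1}`. -/
def diskOrbit {H : Type*} [NormedAddCommGroup H] [NormedSpace ℂ H]
    (T : H →L[ℂ] H) (x : H) : Set H :=
  {y | ∃ (n : ℕ) (α : ℂ), ‖α‖ ≤ 1 ∧ y = α • (T ^ n) x}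

/-- An operator is diskcyclic if some vector has dense disk orbit. -/
def DiskCyclic {H : Type*} [NormedAddCommGroup H] [NormedSpace ℂ H]
    (T : H →L[ℂ] H) : Prop :=
  ∃ x : H, Dense (diskOrbit T x)

set_option maxHeartbeats 1000000

noncomputable abbrev H2 := lp (fun _ : ℕ => ℂ) 2

lemma pow_coord (w : ℕ → ℝ) (B : H2 →L[ℂ] H2)
    (hB : ∀ (x : H2) (n : ℕ), (B x : ∀ _ : ℕ, ℂ) n = (w (n + 1) : ℂ) * (x : ∀ _ : ℕ, ℂ) (n + 1))
    (x : H2) (n j : ℕ) :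
    ((B ^ n) x : ∀ _ : ℕ, ℂ) j
      = ((∏ k ∈ Finset.range n, w (j + k + 1) : ℝ) : ℂ) * (x : ∀ _ : ℕ, ℂ) (j + n) := by
  induction n generalizing x j with
  | zero => simp
  | succ n ih =>
    rw [pow_succ, ContinuousLinearMap.mul_apply, ih (B x) j, hB, Finset.prod_range_succ]
    push_cast
    have : j + n + 1 = j + (n + 1) := by omega
    rw [this]
    ring

lemma finapprox (x : H2) {ε : ℝ} (hε : 0 < ε) (m₀ : ℕ) :
    ∃ m, m₀ ≤ m ∧ ‖x - ∑ i ∈ Finset.range m, lp.single 2 i ((x : ∀ _ : ℕ, ℂ) i)‖ < ε := by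
  have h := (lp.hasSum_single (by norm_num : (2:ℝ≥0∞) ≠ ⊤) x).tendsto_sum_nat
  rw [Metric.tendsto_atTop] at h
  obtain ⟨N, hN⟩ := h ε hε
  refine ⟨max N m₀, le_max_right _ _, ?_⟩
  have := hN (max N m₀) (le_max_left _ _)
  rwa [dist_eq_norm, norm_sub_rev] at this

lemma norm_single' (i : ℕ) (a : ℂ) : ‖(lp.single 2 i a : H2)‖ = ‖a‖ :=
  lp.norm_single (E := fun _ : ℕ => ℂ) (p := 2) (by norm_num) i a

lemma sum_single_apply (m : ℕ) (f : ℕ → ℂ) (j : ℕ) :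
    ((∑ i ∈ Finset.range m, lp.single 2 i (f i) : H2) : ∀ _ : ℕ, ℂ) j
      = if j < m then f j else 0 := by
  simp only [lp.coeFn_sum, Finset.sum_apply, lp.single_apply, Pi.single_apply, Finset.sum_ite_eq, Finset.sum_ite_eq', Finset.sum_dite_eq,
    Finset.mem_range]

lemma shifted_sum_apply (m n : ℕ) (g : ℕ → ℂ) (j : ℕ) :
    ((∑ i ∈ Finset.range m, lp.single 2 (i + n) (g i) : H2) : ∀ _ : ℕ, ℂ) (j + n)
      = if j < m then g j else 0 := by
  rw [lp.coeFn_sum, Finset.sum_apply]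
  by_cases hj : j < m
  · rw [if_pos hj]
    rw [Finset.sum_eq_single_of_mem j (Finset.mem_range.mpr hj)]
    · exact lp.single_apply_self (E := fun _ : ℕ => ℂ) 2 (j + n) (g j)
    · intro b _ hb
      exact lp.single_apply_ne (E := fun _ : ℕ => ℂ) 2 (b + n) (g b) (by omega)
  · rw [if_neg hj]
    refine Finset.sum_eq_zero fun b hb => ?_
    have : b ≠ j := by rintro rfl; exact hj (Finset.mem_range.mp hb)
    exact lp.single_apply_ne (E := fun _ : ℕ => ℂ) 2 (b + n) (g b) (by omega)

lemma transitivity (w : ℕ → ℝ) (hw : ∀ n, 0 < w n) (M : ℝ) (hM : ∀ n, w n ≤ M)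
    (B : H2 →L[ℂ] H2)
    (hB : ∀ (x : H2) (n : ℕ), (B x : ∀ _ : ℕ, ℂ) n = (w (n + 1) : ℂ) * (x : ∀ _ : ℕ, ℂ) (n + 1))
    (hgrow : ∀ C : ℝ, ∃ n : ℕ, C < ∏ k ∈ Finset.range n, w (k + 1))
    (u₀ v₀ : H2) {ε δ : ℝ} (hε : 0 < ε) (hδ : 0 < δ) :
    ∃ (z : H2) (n : ℕ), ‖z - u₀‖ < ε ∧ ‖(B ^ n) z - v₀‖ < δ := by
  classical
  set P : ℕ → ℝ := fun t => ∏ k ∈ Finset.range t, w (k + 1) with hPdef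
  have hPpos : ∀ t, 0 < P t := fun t => Finset.prod_pos fun k _ => hw _
  set M' : ℝ := max M 2 with hM'
  have hM'1 : (1:ℝ) < M' := lt_of_lt_of_le one_lt_two (le_max_right _ _)
  have hwM' : ∀ n, w n ≤ M' := fun n => le_trans (hM n) (le_max_left _ _)
  have hPle : ∀ t, P t ≤ M' ^ t := by
    intro t
    calc P t ≤ ∏ _k ∈ Finset.range t, M' :=
          Finset.prod_le_prod (fun k _ => (hw _).le) (fun k _ => hwM' _)
      _ = M' ^ t := by rw [Finset.prod_const, Finset.card_range]
  -- finitely supported approximations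
  obtain ⟨mu, -, hu⟩ := finapprox u₀ (by positivity : (0:ℝ) < ε/2) 0
  obtain ⟨m, hmu, hv⟩ := finapprox v₀ (by positivity : (0:ℝ) < δ/2) mu
  set u : H2 := ∑ i ∈ Finset.range mu, lp.single 2 i ((u₀ : ∀ _ : ℕ, ℂ) i) with hudef
  set v : H2 := ∑ i ∈ Finset.range m, lp.single 2 i ((v₀ : ∀ _ : ℕ, ℂ) i) with hvdef
  set c : ℝ := ∑ j ∈ Finset.range m, ‖(v₀ : ∀ _ : ℕ, ℂ) j‖ with hcdef
  have hc0 : 0 ≤ c := Finset.sum_nonneg fun j _ => norm_nonneg _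
  -- choose N with large product
  obtain ⟨N, hN⟩ := hgrow (M' ^ (2*m) * ((c+1) * (2/ε) + 1))
  have hMm_pos : (0:ℝ) < M' ^ (2*m) := by positivity
  have hK1 : (1:ℝ) ≤ (c+1) * (2/ε) + 1 := by
    have : (0:ℝ) < (c+1) * (2/ε) := by positivity
    linarith
  have hN2m : 2*m < N := by
    have h1 : M' ^ (2*m) < P N := lt_of_le_of_lt (by nlinarith) hN
    have h2 : P N ≤ M' ^ N := hPle N
    exact (pow_lt_pow_iff_right₀ hM'1).mp (lt_of_lt_of_le h1 h2)
  set n : ℕ := N - m with hndef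
  have hmn : m ≤ n := by omega
  have hnm : n + m = N := by omega
  -- the product factors
  set q : ℕ → ℝ := fun j => ∏ k ∈ Finset.range n, w (j + k + 1) with hqdef
  have hqpos : ∀ j, 0 < q j := fun j => Finset.prod_pos fun k _ => hw _
  have hsplit : ∀ j, P (j + n) = P j * q j := by
    intro j
    rw [hPdef]
    simp only
    rw [Finset.prod_range_add (fun k => w (k + 1)) j n]
  have hqlb : ∀ j, j < m → P N / M' ^ (2*m) ≤ q j := by
    intro j hj
    have hjn : j + n ≤ N := by omega
    have h1 : P N ≤ P (j + n) * M' ^ m := by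
      have := Finset.prod_range_add (fun k => w (k + 1)) (j + n) (N - (j + n))
      have hNe : j + n + (N - (j + n)) = N := by omega
      rw [hNe] at this
      have h2 : (∏ k ∈ Finset.range (N - (j+n)), w (j + n + k + 1)) ≤ M' ^ (N - (j+n)) := by
        calc (∏ k ∈ Finset.range (N - (j+n)), w (j + n + k + 1))
            ≤ ∏ _k ∈ Finset.range (N - (j+n)), M' :=
              Finset.prod_le_prod (fun k _ => (hw _).le) (fun k _ => hwM' _)
          _ = M' ^ (N - (j+n)) := by rw [Finset.prod_const, Finset.card_range]
      have h3 : M' ^ (N - (j+n)) ≤ M' ^ m :=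
        pow_le_pow_right₀ (by linarith) (by omega)
      calc P N = P (j + n) * (∏ k ∈ Finset.range (N - (j+n)), w (j + n + k + 1)) := this
        _ ≤ P (j + n) * M' ^ (N - (j+n)) := by
            exact mul_le_mul_of_nonneg_left h2 (hPpos _).le
        _ ≤ P (j + n) * M' ^ m := mul_le_mul_of_nonneg_left h3 (hPpos _).le
    have h4 : P j ≤ M' ^ m := le_trans (hPle j) (pow_le_pow_right₀ (by linarith) hj.le)
    have h5 : P (j + n) = P j * q j := hsplit j
    -- q j = P (j+n) / P j ≥ (P N / M'^m) / M'^m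
    rw [div_le_iff₀ hMm_pos]
    have : P N ≤ P j * q j * M' ^ m := by rw [← h5]; exact h1
    have hqj := (hqpos j).le
    have hMmj : (0:ℝ) < M' ^ m := by positivity
    calc P N ≤ P j * q j * M' ^ m := this
      _ ≤ M' ^ m * q j * M' ^ m :=
          mul_le_mul_of_nonneg_right (mul_le_mul_of_nonneg_right h4 hqj) hMmj.le
      _ = q j * M' ^ (2*m) := by rw [two_mul, pow_add]; ring
  -- the correction vector
  set g : ℕ → ℂ := fun j => ((v₀ : ∀ _ : ℕ, ℂ) j) / ((q j : ℝ) : ℂ) with hgdef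
  set y : H2 := ∑ j ∈ Finset.range m, lp.single 2 (j + n) (g j) with hydef
  have hynorm : ‖y‖ < ε / 2 := by
    have hPN : 0 < P N := hPpos N
    have h6 : ∀ j ∈ Finset.range m, ‖(lp.single 2 (j + n) (g j) : H2)‖
        ≤ ‖(v₀ : ∀ _ : ℕ, ℂ) j‖ * (M' ^ (2*m) / P N) := by
      intro j hj
      rw [norm_single', hgdef]
      simp only
      rw [norm_div, Complex.norm_real, Real.norm_eq_abs, abs_of_pos (hqpos j)]
      rw [div_le_iff₀ (hqpos j)]
      have := hqlb j (Finset.mem_range.mp hj)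
      have e1 : (M' ^ (2*m) / P N) * (P N / M' ^ (2*m)) = 1 := by
        field_simp
      calc ‖(v₀ : ∀ _ : ℕ, ℂ) j‖
          = ‖(v₀ : ∀ _ : ℕ, ℂ) j‖ * ((M' ^ (2*m) / P N) * (P N / M' ^ (2*m))) := by
            rw [e1, mul_one]
        _ ≤ ‖(v₀ : ∀ _ : ℕ, ℂ) j‖ * ((M' ^ (2*m) / P N) * q j) :=
            mul_le_mul_of_nonneg_left
              (mul_le_mul_of_nonneg_left this (by positivity)) (norm_nonneg _)
        _ = ‖(v₀ : ∀ _ : ℕ, ℂ) j‖ * (M' ^ (2*m) / P N) * q j := by ring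
    have h7 : ‖y‖ ≤ c * (M' ^ (2*m) / P N) := by
      calc ‖y‖ ≤ ∑ j ∈ Finset.range m, ‖(lp.single 2 (j + n) (g j) : H2)‖ := norm_sum_le _ _
        _ ≤ ∑ j ∈ Finset.range m, ‖(v₀ : ∀ _ : ℕ, ℂ) j‖ * (M' ^ (2*m) / P N) :=
            Finset.sum_le_sum h6
        _ = c * (M' ^ (2*m) / P N) := by rw [← Finset.sum_mul]
    have h8 : c * (M' ^ (2*m) / P N) < ε / 2 := by
      rw [mul_div_assoc', div_lt_iff₀ (hPpos N)]
      have h9 : ε / 2 * (M' ^ (2*m) * ((c+1) * (2/ε) + 1)) = M' ^ (2*m) * (c + 1) + ε/2 * M' ^ (2*m) := by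
        field_simp
      have hN' : M' ^ (2*m) * ((c+1) * (2/ε) + 1) < P N := hN
      have h10 : ε/2 * (M' ^ (2*m) * ((c+1) * (2/ε) + 1)) < ε/2 * P N :=
        mul_lt_mul_of_pos_left hN' (by positivity)
      rw [h9] at h10
      nlinarith [mul_pos (half_pos hε) hMm_pos, hMm_pos]
    linarith
  refine ⟨u + y, n, ?_, ?_⟩
  · have : u + y - u₀ = (u - u₀) + y := by abel
    rw [this]
    calc ‖(u - u₀) + y‖ ≤ ‖u - u₀‖ + ‖y‖ := norm_add_le _ _
      _ < ε/2 + ε/2 := by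
          rw [norm_sub_rev]
          exact add_lt_add hu hynorm
      _ = ε := by ring
  · have hBnz : (B ^ n) (u + y) = v := by
      apply lp.ext
      funext j
      rw [pow_coord w B hB (u + y) n j]
      rw [lp.coeFn_add, Pi.add_apply]
      have hu0 : ((u : ∀ _ : ℕ, ℂ)) (j + n) = 0 := by
        rw [hudef, sum_single_apply, if_neg (by omega)]
      have hy0 : ((y : ∀ _ : ℕ, ℂ)) (j + n) = if j < m then g j else 0 := by
        rw [hydef, shifted_sum_apply]
      rw [hu0, hy0, zero_add]
      rw [hvdef, sum_single_apply]
      by_cases hj : j < m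
      · rw [if_pos hj, if_pos hj, hgdef]
        simp only
        rw [mul_div_cancel₀]
        exact_mod_cast (hqpos j).ne'
      · rw [if_neg hj, if_neg hj, mul_zero]
    rw [hBnz]
    calc ‖v - v₀‖ = ‖v₀ - v‖ := norm_sub_rev _ _
      _ < δ/2 := hv
      _ < δ := by linarith

lemma forward_dir (w : ℕ → ℝ) (hw : ∀ n, 0 < w n) (B : H2 →L[ℂ] H2)
    (hB : ∀ (x : H2) (n : ℕ), (B x : ∀ _ : ℕ, ℂ) n = (w (n + 1) : ℂ) * (x : ∀ _ : ℕ, ℂ) (n + 1))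
    (x : H2) (hx : Dense (diskOrbit B x)) (M : ℝ) :
    ∃ n : ℕ, M < ∏ k ∈ Finset.range n, w (k + 1) := by
  by_contra hcon
  push_neg at hcon
  -- hcon : ∀ n, ∏ ≤ M
  set C : ℝ := max M 1 * ‖x‖ + 2 with hC
  have hM1 : (0:ℝ) < max M 1 := lt_of_lt_of_le one_pos (le_max_right _ _)
  have hC2 : (2:ℝ) ≤ C := by
    have : 0 ≤ max M 1 * ‖x‖ := mul_nonneg hM1.le (norm_nonneg _)
    linarith
  -- target vector
  set t : H2 := lp.single 2 0 (C : ℂ) with ht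
  obtain ⟨y, hy, hdist⟩ := (Metric.dense_iff.mp hx t 1 one_pos)
  obtain ⟨n, α, hα, rfl⟩ := hdist
  -- coordinate 0 of the orbit point
  have hcoord : ((α • (B ^ n) x : H2) : ∀ _ : ℕ, ℂ) 0
      = α * (((∏ k ∈ Finset.range n, w (k + 1) : ℝ) : ℂ) * (x : ∀ _ : ℕ, ℂ) n) := by
    rw [lp.coeFn_smul, Pi.smul_apply, smul_eq_mul, pow_coord w B hB x n 0]
    simp
  have hbound : ‖((α • (B ^ n) x : H2) : ∀ _ : ℕ, ℂ) 0‖ ≤ max M 1 * ‖x‖ := by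
    rw [hcoord]
    have h1 : ‖(x : ∀ _ : ℕ, ℂ) n‖ ≤ ‖x‖ := lp.norm_apply_le_norm (by norm_num) x n
    have h2 : (0:ℝ) ≤ ∏ k ∈ Finset.range n, w (k + 1) :=
      Finset.prod_nonneg fun k _ => (hw _).le
    have h3 : (∏ k ∈ Finset.range n, w (k + 1)) ≤ max M 1 := by
      rcases Nat.eq_zero_or_pos n with rfl | hn
      · simp
      · exact le_trans (hcon n) (le_max_left _ _)
    calc ‖α * (((∏ k ∈ Finset.range n, w (k + 1) : ℝ) : ℂ) * (x : ∀ _ : ℕ, ℂ) n)‖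
        = ‖α‖ * (‖((∏ k ∈ Finset.range n, w (k + 1) : ℝ) : ℂ)‖ * ‖(x : ∀ _ : ℕ, ℂ) n‖) := by
          rw [norm_mul, norm_mul]
      _ ≤ 1 * (max M 1 * ‖x‖) := by
          refine mul_le_mul hα ?_ (by positivity) one_pos.le
          refine mul_le_mul ?_ h1 (norm_nonneg _) hM1.le
          rw [Complex.norm_real, Real.norm_eq_abs, abs_of_nonneg h2]; exact h3
      _ = max M 1 * ‖x‖ := one_mul _
  -- but distance to t is < 1
  have hd : dist (α • (B ^ n) x) t < 1 := Metric.mem_ball.mp hy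
  have hco : ‖((α • (B ^ n) x : H2) : ∀ _ : ℕ, ℂ) 0 - (C:ℂ)‖ ≤ dist (α • (B ^ n) x) t := by
    rw [dist_eq_norm]
    have := lp.norm_apply_le_norm (p := 2) (by norm_num) ((α • (B ^ n) x) - t) 0
    rwa [lp.coeFn_sub, Pi.sub_apply, ht, lp.single_apply_self] at this
  have habs : C - max M 1 * ‖x‖ ≤ ‖((α • (B ^ n) x : H2) : ∀ _ : ℕ, ℂ) 0 - (C:ℂ)‖ := by
    have h4 : ‖(C:ℂ)‖ - ‖((α • (B ^ n) x : H2) : ∀ _ : ℕ, ℂ) 0‖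
        ≤ ‖((α • (B ^ n) x : H2) : ∀ _ : ℕ, ℂ) 0 - (C:ℂ)‖ := by
      have := norm_sub_norm_le ((C:ℂ)) (((α • (B ^ n) x : H2) : ∀ _ : ℕ, ℂ) 0)
      rw [norm_sub_rev] at this
      linarith
    have h5 : ‖(C:ℂ)‖ = C := by
      rw [Complex.norm_real, Real.norm_eq_abs, abs_of_nonneg (by linarith)]
    linarith [hbound]
  linarith [hco, habs, hd, hC2]

-- appended parts: separability, Baire, backward direction, main theorem

lemma single_sub (i : ℕ) (a b : ℂ) :
    lp.single 2 i (a - b) = (lp.single 2 i a : H2) - lp.single 2 i b := by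
  apply lp.ext
  funext j
  rw [lp.coeFn_sub, Pi.sub_apply]
  by_cases h : j = i
  · subst h; rw [lp.single_apply_self, lp.single_apply_self, lp.single_apply_self]
  · rw [lp.single_apply_ne _ _ _ h, lp.single_apply_ne _ _ _ h, lp.single_apply_ne _ _ _ h,
      sub_zero]

/-- rational finitely supported vectors -/
noncomputable def ratVec (m : ℕ) (q : Fin m → ℚ × ℚ) : H2 :=
  ∑ i : Fin m, lp.single 2 (i : ℕ) (((q i).1 : ℂ) + ((q i).2 : ℂ) * Complex.I)

lemma ratSet_countable : (⋃ m : ℕ, Set.range (ratVec m)).Countable :=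
  Set.countable_iUnion fun m => Set.countable_range _

lemma ratSet_dense : Dense (⋃ m : ℕ, Set.range (ratVec m)) := by
  rw [Metric.dense_iff]
  intro x r hr
  obtain ⟨m, -, hm⟩ := finapprox x (by positivity : (0:ℝ) < r/2) 0
  have key : ∀ i : ℕ, ∃ q : ℚ × ℚ,
      ‖(x : ∀ _ : ℕ, ℂ) i - (((q.1 : ℂ)) + (q.2 : ℂ) * Complex.I)‖ < r / (2 * (m + 1)) := by
    intro i
    obtain ⟨a, ha⟩ := exists_rat_near ((x : ∀ _ : ℕ, ℂ) i).re (by positivity : 0 < r / (4 * (m+1)))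
    obtain ⟨b, hb⟩ := exists_rat_near ((x : ∀ _ : ℕ, ℂ) i).im (by positivity : 0 < r / (4 * (m+1)))
    refine ⟨(a, b), ?_⟩
    set z : ℂ := (x : ∀ _ : ℕ, ℂ) i - (((a:ℂ)) + (b:ℂ) * Complex.I) with hz
    have hre : z.re = ((x : ∀ _ : ℕ, ℂ) i).re - a := by simp [hz]
    have him : z.im = ((x : ∀ _ : ℕ, ℂ) i).im - b := by simp [hz]
    have h1 : ‖z‖ ≤ |z.re| + |z.im| := Complex.norm_le_abs_re_add_abs_im z
    rw [hre, him] at h1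
    have h2 : (r + r) / (4 * ((m:ℝ)+1)) = r / (2 * ((m:ℝ) + 1)) := by
      field_simp
      ring
    calc ‖z‖ ≤ _ := h1
      _ < r / (4 * (m+1)) + r / (4 * (m+1)) := add_lt_add ha hb
      _ = r / (2 * (m + 1)) := by rw [← add_div]; exact h2
  choose q hq using key
  set c : ℕ → ℂ := fun i => ((q i).1 : ℂ) + ((q i).2 : ℂ) * Complex.I with hc
  refine ⟨ratVec m (fun i => q i), ?_, Set.mem_iUnion.mpr ⟨m, Set.mem_range_self _⟩⟩
  rw [Metric.mem_ball, dist_comm, dist_eq_norm]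
  have hrat : ratVec m (fun i => q i) = ∑ i ∈ Finset.range m, lp.single 2 i (c i) :=
    (Finset.sum_range fun i => lp.single 2 i (c i)).symm
  have hsplit : x - ratVec m (fun i => q i)
      = (x - ∑ i ∈ Finset.range m, lp.single 2 i ((x : ∀ _ : ℕ, ℂ) i))
        + ∑ i ∈ Finset.range m, lp.single 2 i ((x : ∀ _ : ℕ, ℂ) i - c i) := by
    rw [hrat]
    have : ∀ i ∈ Finset.range m, lp.single 2 i ((x : ∀ _ : ℕ, ℂ) i - c i)
        = (lp.single 2 i ((x : ∀ _ : ℕ, ℂ) i) : H2) - lp.single 2 i (c i) :=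
      fun i _ => single_sub i _ _
    rw [Finset.sum_congr rfl this, Finset.sum_sub_distrib]
    abel
  have hb2 : ‖∑ i ∈ Finset.range m, lp.single 2 i ((x : ∀ _ : ℕ, ℂ) i - c i)‖ ≤ r / 2 := by
    calc ‖∑ i ∈ Finset.range m, lp.single 2 i ((x : ∀ _ : ℕ, ℂ) i - c i)‖
        ≤ ∑ i ∈ Finset.range m, ‖(lp.single 2 i ((x : ∀ _ : ℕ, ℂ) i - c i) : H2)‖ :=
          norm_sum_le _ _
      _ ≤ ∑ i ∈ Finset.range m, r / (2 * (m + 1)) := by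
          refine Finset.sum_le_sum fun i _ => ?_
          rw [norm_single']
          exact (hq i).le
      _ = m * (r / (2 * (m + 1))) := by rw [Finset.sum_const, Finset.card_range, nsmul_eq_mul]
      _ ≤ r / 2 := by
          rw [← mul_div_assoc, div_le_div_iff₀ (by positivity) (by norm_num)]
          nlinarith [hr.le, Nat.cast_nonneg (α := ℝ) m]
  calc ‖x - ratVec m (fun i => q i)‖
      ≤ ‖x - ∑ i ∈ Finset.range m, lp.single 2 i ((x : ∀ _ : ℕ, ℂ) i)‖
        + ‖∑ i ∈ Finset.range m, lp.single 2 i ((x : ∀ _ : ℕ, ℂ) i - c i)‖ := by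
        rw [hsplit]; exact norm_add_le _ _
    _ < r / 2 + r / 2 := add_lt_add_of_lt_of_le hm hb2
    _ = r := by ring

lemma h2_separable : TopologicalSpace.SeparableSpace H2 :=
  ⟨⟨⋃ m : ℕ, Set.range (ratVec m), ratSet_countable, ratSet_dense⟩⟩

lemma backward_dir (w : ℕ → ℝ) (hw : ∀ n, 0 < w n) (M : ℝ) (hM : ∀ n, w n ≤ M)
    (B : H2 →L[ℂ] H2)
    (hB : ∀ (x : H2) (n : ℕ), (B x : ∀ _ : ℕ, ℂ) n = (w (n + 1) : ℂ) * (x : ∀ _ : ℕ, ℂ) (n + 1))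
    (hgrow : ∀ C : ℝ, ∃ n : ℕ, C < ∏ k ∈ Finset.range n, w (k + 1)) :
    DiskCyclic B := by
  haveI : TopologicalSpace.SeparableSpace H2 := h2_separable
  haveI : Nonempty H2 := ⟨0⟩
  set v : ℕ → H2 := TopologicalSpace.denseSeq H2 with hvdef
  have hv : DenseRange v := TopologicalSpace.denseRange_denseSeq H2
  set G : ℕ × ℕ → Set H2 := fun p =>
    ⋃ n : ℕ, (⇑(B ^ n)) ⁻¹' Metric.ball (v p.1) (1/(p.2+1)) with hGdef
  have hopen : ∀ p, IsOpen (G p) := fun p =>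
    isOpen_iUnion fun n => Metric.isOpen_ball.preimage (B ^ n).continuous
  have hdense : ∀ p, Dense (G p) := by
    intro p
    rw [Metric.dense_iff]
    intro x r hr
    have hδ : (0:ℝ) < 1/(p.2+1) := by positivity
    obtain ⟨z, n, hz1, hz2⟩ := transitivity w hw M hM B hB hgrow x (v p.1) hr hδ
    refine ⟨z, ?_, Set.mem_iUnion.mpr ⟨n, ?_⟩⟩
    · rw [Metric.mem_ball, dist_eq_norm]; exact hz1
    · rw [Set.mem_preimage, Metric.mem_ball, dist_eq_norm]; exact hz2
  obtain ⟨x, hx⟩ := (dense_iInter_of_isOpen hopen hdense).nonempty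
  refine ⟨x, ?_⟩
  rw [Metric.dense_iff]
  intro t r hr
  obtain ⟨i, hi⟩ := Metric.denseRange_iff.mp hv t (r/2) (by positivity)
  obtain ⟨k, hk⟩ := exists_nat_one_div_lt (show (0:ℝ) < r/2 by positivity)
  have hxk : x ∈ G (i, k) := Set.mem_iInter.mp hx (i, k)
  obtain ⟨n, hn⟩ := Set.mem_iUnion.mp hxk
  rw [Set.mem_preimage, Metric.mem_ball] at hn
  refine ⟨(B ^ n) x, ?_, ⟨n, 1, by norm_num, (one_smul ℂ _).symm⟩⟩
  rw [Metric.mem_ball]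
  calc dist ((B ^ n) x) t ≤ dist ((B ^ n) x) (v i) + dist (v i) t := dist_triangle _ _ _
    _ < 1/(k+1) + r/2 := by
        rw [dist_comm (v i) t]
        exact add_lt_add hn hi
    _ < r/2 + r/2 := by
        have : (1:ℝ)/(k+1) < r/2 := hk
        linarith
    _ = r := by ring

theorem stmt17 (w : ℕ → ℝ) (hw : ∀ n, 0 < w n) (hbdd : ∃ M : ℝ, ∀ n, w n ≤ M)
    (B : lp (fun _ : ℕ => ℂ) 2 →L[ℂ] lp (fun _ : ℕ => ℂ) 2)
    (hB : ∀ (x : lp (fun _ : ℕ => ℂ) 2) (n : ℕ),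
      (B x : ∀ _ : ℕ, ℂ) n = (w (n + 1) : ℂ) * (x : ∀ _ : ℕ, ℂ) (n + 1)) :
    DiskCyclic B ↔ ∀ M : ℝ, ∃ n : ℕ, M < ∏ k ∈ Finset.range n, w (k + 1) := by
  constructor
  · rintro ⟨x, hx⟩ M
    exact forward_dir w hw B hB x hx M
  · intro h
    obtain ⟨M, hM⟩ := hbdd
    exact backward_dir w hw M hM B hB h
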